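/- Let x̄, w̄, ū₁, s̄ > 0, set u_max := ū₁ + s̄, and assume x̄ ≥ w̄ + 0.1(u_max + ū₁). Let κ̂ : ℝ → ℝ be a function with |κ̂(y)| ≤ ū₁ for all y, and let e₀ ≥ 0 satisfy |κ̂(y) − sat_{ū₁}(−10y)| ≤ e₀ for all y ∈ ℝ and 0.1ū₁ ≥ 0.1(e₀ + s̄) + w̄. Then for every x ∈ ℝ with |x| ≤ x̄ − w̄ − 0.1u_max, every s with |s| ≤ s̄, and every w with |w| ≤ w̄, one has | x + 0.1·𝟙_{[−x̄,x̄]}(x)·(κ̂(x) + s) + w | ≤ x̄ − w̄ − 0.1u_max. (This verifies robust positive invariance of the interval [−(x̄−w̄−0.1u_max), x̄−w̄−0.1u_max] for the piecewise-affine example system x⁺ = x + 0.1·𝟙_{|x|≤x̄}·u + w.) -/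
import Mathlib


noncomputable section

/-- Scalar saturation function. -/
noncomputable def satR (r v : ℝ) : ℝ := if |v| ≤ r then v else r * Real.sign v

theorem pwa_example_robust_positive_invariance
    (xb wb u1 sb : ℝ) (hxb : 0 < xb) (hwb : 0 < wb) (hu1 : 0 < u1) (hsb : 0 < sb)
    (umax : ℝ) (humax : umax = u1 + sb)
    (hgrow : wb + 0.1 * (umax + u1) ≤ xb)
    (κ : ℝ → ℝ) (hκbdd : ∀ y, |κ y| ≤ u1)
    (e0 : ℝ) (he0 : 0 ≤ e0)
    (hκe : ∀ y : ℝ, |κ y - satR u1 (-(10 * y))| ≤ e0)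
    (hmargin : 0.1 * (e0 + sb) + wb ≤ 0.1 * u1) :
    ∀ x s w : ℝ, |x| ≤ xb - wb - 0.1 * umax → |s| ≤ sb → |w| ≤ wb →
      |x + 0.1 * (if |x| ≤ xb then (1 : ℝ) else 0) * (κ x + s) + w| ≤
        xb - wb - 0.1 * umax := by
  intro x s w hx hs hw
  have hB : 0.1 * u1 ≤ xb - wb - 0.1 * umax := by nlinarith
  have hxxb : |x| ≤ xb := le_trans hx (by nlinarith [abs_nonneg w])
  rw [if_pos hxxb]
  have he := hκe x
  have hk := hκbdd x
  rw [abs_le] at hx hs hw he hk ⊢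
  unfold satR at he
  by_cases hc : |-(10 * x)| ≤ u1
  · rw [if_pos hc] at he
    rw [abs_le] at hc
    constructor <;> linarith
  · rw [if_neg hc] at he
    push_neg at hc
    rcases lt_trichotomy x 0 with hx0 | hx0 | hx0
    · have hs1 : Real.sign (-(10*x)) = 1 := Real.sign_of_pos (by linarith)
      rw [hs1] at he
      have hxlt : u1 < -(10*x) := by rwa [abs_of_pos (by linarith)] at hc
      constructor <;> linarith
    · exfalso; rw [hx0] at hc; simp at hc; linarith
    · have hs1 : Real.sign (-(10*x)) = -1 := Real.sign_of_neg (by linarith)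
      rw [hs1] at he
      have hxlt : u1 < 10*x := by
        have := hc; rw [abs_of_neg (by linarith : -(10*x) < 0)] at this; linarith
      constructor <;> linarith

end
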